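/- Let f̃ : ℝ^d → ℝ be continuously differentiable and ℓ̃-smooth. Then for every x ∈ ℝ^d and every δ > 0, ‖∇f̃_δ(x) − ∇f̃(x)‖² ≤ ℓ̃² δ² d² / 4, where f̃_δ denotes the δ-smoothed function. -/

import Mathlib

open MeasureTheory Metric

/-- The uniform (normalized Lebesgue) probability measure on the unit ball of `ℝ^d`. -/
noncomputable def ballUniform (d : ℕ) : Measure (EuclideanSpace ℝ (Fin d)) :=
  (volume (ball (0 : EuclideanSpace ℝ (Fin d)) 1))⁻¹ •
    volume.restrict (ball (0 : EuclideanSpace ℝ (Fin d)) 1)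

/-- The `δ`-smoothed function `f̃_δ(x) = E_{v̄ ~ Unif(B^d)}[f̃(x + δ v̄)]`. -/
noncomputable def smoothed {d : ℕ} (f : EuclideanSpace ℝ (Fin d) → ℝ) (δ : ℝ)
    (x : EuclideanSpace ℝ (Fin d)) : ℝ :=
  ∫ v, f (x + δ • v) ∂(ballUniform d)

lemma ballUniform_isProb (d : ℕ) : IsProbabilityMeasure (ballUniform d) := by
  constructor
  rw [ballUniform, Measure.smul_apply, Measure.restrict_apply_univ, smul_eq_mul]
  exact ENNReal.inv_mul_cancel (measure_ball_pos volume 0 one_pos).ne' measure_ball_lt_top.ne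

lemma ae_mem_ball (d : ℕ) : ∀ᵐ v ∂(ballUniform d), v ∈ ball (0 : EuclideanSpace ℝ (Fin d)) 1 := by
  rw [ballUniform]
  exact Measure.ae_smul_measure (ae_restrict_mem measurableSet_ball) _

lemma integrable_ballUniform {d : ℕ} {X : Type*} [NormedAddCommGroup X]
    (g : EuclideanSpace ℝ (Fin d) → X) (hg : Continuous g) : Integrable g (ballUniform d) := by
  rw [ballUniform]
  refine Integrable.smul_measure ?_ (ENNReal.inv_ne_top.2 (measure_ball_pos volume 0 one_pos).ne')
  obtain ⟨C, hC⟩ := (isCompact_closedBall (0 : EuclideanSpace ℝ (Fin d)) 1).exists_bound_of_continuousOn hg.continuousOn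
  exact Measure.integrableOn_of_bounded measure_ball_lt_top.ne hg.aestronglyMeasurable
    (ae_restrict_of_forall_mem measurableSet_ball fun v hv => hC v (ball_subset_closedBall hv))

lemma hasFDerivAt_smoothed {d : ℕ} (f : EuclideanSpace ℝ (Fin d) → ℝ)
    (hf : ContDiff ℝ 1 f) (δ : ℝ) (hδ : 0 < δ) (x : EuclideanSpace ℝ (Fin d)) :
    HasFDerivAt (smoothed f δ) (∫ v, fderiv ℝ f (x + δ • v) ∂(ballUniform d)) x := by
  haveI := ballUniform_isProb d
  have hfc : Continuous (fderiv ℝ f) := hf.continuous_fderiv one_ne_zero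
  obtain ⟨C, hC⟩ := (isCompact_closedBall x (1 + δ)).exists_bound_of_continuousOn
    hfc.continuousOn
  have haff : ∀ v : EuclideanSpace ℝ (Fin d), Continuous fun y : EuclideanSpace ℝ (Fin d) => y + δ • v :=
    fun v => continuous_id.add continuous_const
  have key : HasFDerivAt (fun y => ∫ v, f (y + δ • v) ∂(ballUniform d))
      (∫ v, fderiv ℝ f (x + δ • v) ∂(ballUniform d)) x := by
    apply hasFDerivAt_integral_of_dominated_of_fderiv_le
      (F' := fun y v => fderiv ℝ f (y + δ • v)) (bound := fun _ => C) (s := ball x 1) (ball_mem_nhds x one_pos)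
    · exact Filter.Eventually.of_forall fun y =>
        Continuous.aestronglyMeasurable (hf.continuous.comp (continuous_const.add (continuous_const_smul δ)))
    · exact integrable_ballUniform _ (hf.continuous.comp (continuous_const.add (continuous_const_smul δ)))
    · exact (hfc.comp (continuous_const.add (continuous_const_smul δ))).aestronglyMeasurable
    · filter_upwards [ae_mem_ball d] with v hv y hy
      apply hC
      rw [mem_closedBall]
      have : y + δ • v - x = (y - x) + δ • v := by abel
      calc dist (y + δ • v) x = ‖(y - x) + δ • v‖ := by rw [dist_eq_norm, this]
        _ ≤ ‖y - x‖ + ‖δ • v‖ := norm_add_le _ _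
        _ ≤ 1 + δ := by
            have h1 : ‖y - x‖ ≤ 1 := le_of_lt (mem_ball_iff_norm.mp hy)
            have h2 : ‖δ • v‖ ≤ δ := by
              rw [norm_smul, Real.norm_eq_abs, abs_of_pos hδ]
              nlinarith [mem_ball_zero_iff.mp hv, norm_nonneg v]
            linarith
    · exact integrable_const C
    · refine Filter.Eventually.of_forall fun v => fun y _ => ?_
      have h1 : HasFDerivAt (fun z : EuclideanSpace ℝ (Fin d) => z + δ • v)
          (ContinuousLinearMap.id ℝ _) y := (hasFDerivAt_id y).add_const (δ • v)
      have h2 := (hf.differentiable one_ne_zero (y + δ • v)).hasFDerivAt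
      have := h2.comp y h1
      simpa [Function.comp_def] using this
  exact key

noncomputable def ψ : EuclideanSpace ℝ (Fin 1) ≃ᵐ ℝ :=
  (MeasurableEquiv.toLp 2 (Fin 1 → ℝ)).symm.trans (MeasurableEquiv.funUnique (Fin 1) ℝ)

lemma hψ : MeasurePreserving ψ volume volume :=
  (volume_preserving_funUnique (Fin 1) ℝ).comp (EuclideanSpace.volume_preserving_symm_measurableEquiv_toLp (Fin 1))

lemma hnorm (v : EuclideanSpace ℝ (Fin 1)) : ‖v‖ = |ψ v| := by
  rw [EuclideanSpace.norm_eq]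
  simp [ψ, Fin.sum_univ_one, Real.sqrt_sq_eq_abs, MeasurableEquiv.toLp,
    MeasurableEquiv.funUnique, Equiv.funUnique]
  rfl

lemma hpre : ball (0 : EuclideanSpace ℝ (Fin 1)) 1 = ψ ⁻¹' (ball (0:ℝ) 1) := by
  ext v
  simp [mem_ball_zero_iff, hnorm v, Real.norm_eq_abs]

lemma volB : volume (ball (0 : EuclideanSpace ℝ (Fin 1)) 1) = ENNReal.ofReal 2 := by
  rw [hpre, hψ.measure_preimage measurableSet_ball.nullMeasurableSet]
  simp [Real.volume_ball]

lemma intAbs : (∫ y in ball (0:ℝ) 1, |y|) = 1 := by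
  rw [Real.ball_eq_Ioo, ← integral_Ioc_eq_integral_Ioo]
  norm_num
  rw [← intervalIntegral.integral_of_le (by norm_num : (-1:ℝ) ≤ 1)]
  have h1 : (∫ x in (-1:ℝ)..0, |x|) = 1/2 := by
    rw [intervalIntegral.integral_congr (g := fun x => -x)
      (fun x hx => abs_of_nonpos (by
        rcases hx with ⟨h1, h2⟩
        simp at h1 h2 ⊢
        linarith))]
    rw [intervalIntegral.integral_neg, integral_id]
    norm_num
  have h2 : (∫ x in (0:ℝ)..1, |x|) = 1/2 := by
    rw [intervalIntegral.integral_congr (g := fun x => x)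
      (fun x hx => abs_of_nonneg (by
        rcases hx with ⟨h1, h2⟩
        simp at h1 h2 ⊢
        linarith))]
    rw [integral_id]; norm_num
  rw [← intervalIntegral.integral_add_adjacent_intervals (b := (0:ℝ))
    (continuous_abs.intervalIntegrable _ _) (continuous_abs.intervalIntegrable _ _), h1, h2]
  norm_num

lemma intB : (∫ v in ball (0 : EuclideanSpace ℝ (Fin 1)) 1, ‖v‖) = 1 := by
  rw [hpre]
  have h1 : (∫ v in ψ ⁻¹' (ball (0:ℝ) 1), ‖v‖) = ∫ v in ψ ⁻¹' (ball (0:ℝ) 1), |ψ v| :=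
    setIntegral_congr_fun (ψ.measurableSet_preimage.2 measurableSet_ball) fun v _ => hnorm v
  rw [h1, hψ.setIntegral_preimage_emb ψ.measurableEmbedding (fun y => |y|) (ball 0 1)]
  exact intAbs

lemma integral_norm_ballUniform_le {d : ℕ} (hd : 1 ≤ d) :
    (∫ v, ‖v‖ ∂(ballUniform d)) ≤ (d : ℝ) / 2 := by
  haveI := ballUniform_isProb d
  rcases eq_or_lt_of_le hd with h1 | h2
  · -- d = 1
    subst h1
    rw [ballUniform, integral_smul_measure, volB, intB]
    rw [ENNReal.toReal_inv, ENNReal.toReal_ofReal (by norm_num : (0:ℝ) ≤ 2)]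
    norm_num
  · -- d ≥ 2
    have hb : (∫ v, ‖v‖ ∂(ballUniform d)) ≤ ∫ _v, (1:ℝ) ∂(ballUniform d) := by
      refine integral_mono_ae (integrable_ballUniform _ continuous_norm) (integrable_const 1) ?_
      filter_upwards [ae_mem_ball d] with v hv
      exact le_of_lt (mem_ball_zero_iff.mp hv)
    rw [integral_const, probReal_univ, one_smul] at hb
    have : (2:ℝ) ≤ d := by exact_mod_cast h2
    linarith

/-- **Smoothing bias bound.** If `f̃ : ℝ^d → ℝ` is continuously differentiable and
`ℓ̃`-smooth, then for every `x` and every `δ > 0`,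
`‖∇f̃_δ(x) − ∇f̃(x)‖² ≤ ℓ̃² δ² d² / 4`. -/
theorem smoothing_bias_bound
    {d : ℕ} (f : EuclideanSpace ℝ (Fin d) → ℝ) (ℓ : ℝ) (hℓ : 0 < ℓ)
    (hf : ContDiff ℝ 1 f)
    (hsmooth : ∀ x x', ‖gradient f x - gradient f x'‖ ≤ ℓ * ‖x - x'‖)
    (x : EuclideanSpace ℝ (Fin d)) (δ : ℝ) (hδ : 0 < δ) :
    ‖gradient (smoothed f δ) x - gradient f x‖ ^ 2 ≤ ℓ ^ 2 * δ ^ 2 * (d : ℝ) ^ 2 / 4 := by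
  rcases Nat.eq_zero_or_pos d with hd | hd
  · subst hd
    haveI : Subsingleton (EuclideanSpace ℝ (Fin 0)) := ⟨fun a b => by ext i; exact i.elim0⟩
    have h0 : gradient (smoothed f δ) x - gradient f x = 0 := Subsingleton.elim _ _
    rw [h0]
    simp
  · haveI := ballUniform_isProb d
    set μ := ballUniform d with hμ
    have hder := hasFDerivAt_smoothed f hf δ hδ x
    have hgs : gradient (smoothed f δ) x
        = (InnerProductSpace.toDual ℝ _).symm (∫ v, fderiv ℝ f (x + δ • v) ∂μ) := by
      have : gradient (smoothed f δ) x
          = (InnerProductSpace.toDual ℝ _).symm (fderiv ℝ (smoothed f δ) x) := rfl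
      rw [this, hder.fderiv]
    have hdg : ∀ y, (InnerProductSpace.toDual ℝ (EuclideanSpace ℝ (Fin d))) (gradient f y)
        = fderiv ℝ f y := fun y => LinearIsometryEquiv.apply_symm_apply _ _
    have hint : Integrable (fun v => fderiv ℝ f (x + δ • v)) μ :=
      integrable_ballUniform _ ((hf.continuous_fderiv one_ne_zero).comp
        (continuous_const.add (continuous_const_smul δ)))
    have main : ‖gradient (smoothed f δ) x - gradient f x‖ ≤ ℓ * δ * ((d : ℝ) / 2) := by
      have e1 : gradient (smoothed f δ) x - gradient f x
          = (InnerProductSpace.toDual ℝ _).symm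
              ((∫ v, fderiv ℝ f (x + δ • v) ∂μ) - fderiv ℝ f x) := by
        rw [map_sub, ← hgs]
        rfl
      rw [e1, LinearIsometryEquiv.norm_map]
      have e2 : (∫ v, fderiv ℝ f (x + δ • v) ∂μ) - fderiv ℝ f x
          = ∫ v, (fderiv ℝ f (x + δ • v) - fderiv ℝ f x) ∂μ := by
        rw [integral_sub hint (integrable_const _), integral_const, probReal_univ,
          one_smul]
      rw [e2]
      have hptwise : ∀ v : EuclideanSpace ℝ (Fin d),
          ‖fderiv ℝ f (x + δ • v) - fderiv ℝ f x‖ ≤ ℓ * δ * ‖v‖ := by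
        intro v
        have h1 : fderiv ℝ f (x + δ • v) - fderiv ℝ f x
            = (InnerProductSpace.toDual ℝ _) (gradient f (x + δ • v) - gradient f x) := by
          rw [map_sub, hdg, hdg]
        rw [h1, LinearIsometryEquiv.norm_map]
        calc ‖gradient f (x + δ • v) - gradient f x‖ ≤ ℓ * ‖(x + δ • v) - x‖ := hsmooth _ _
          _ = ℓ * δ * ‖v‖ := by
              rw [add_sub_cancel_left, norm_smul, Real.norm_eq_abs, abs_of_pos hδ]
              ring
      calc ‖∫ v, (fderiv ℝ f (x + δ • v) - fderiv ℝ f x) ∂μ‖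
          ≤ ∫ v, ℓ * δ * ‖v‖ ∂μ := norm_integral_le_of_norm_le
            ((integrable_ballUniform _ continuous_norm).const_mul (ℓ * δ))
            (Filter.Eventually.of_forall hptwise)
        _ = ℓ * δ * ∫ v, ‖v‖ ∂μ := integral_const_mul _ _
        _ ≤ ℓ * δ * ((d : ℝ) / 2) := by
            refine mul_le_mul_of_nonneg_left (integral_norm_ballUniform_le hd) ?_
            positivity
    calc ‖gradient (smoothed f δ) x - gradient f x‖ ^ 2 ≤ (ℓ * δ * ((d : ℝ) / 2)) ^ 2 :=
        pow_le_pow_left₀ (norm_nonneg _) main 2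
      _ = ℓ ^ 2 * δ ^ 2 * (d : ℝ) ^ 2 / 4 := by ring
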